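/- Let p and q be two chords of the unit circle that are disjoint in the open unit disk, and suppose a chord l separates p from q in the open disk. Then ρ(p, l) + ρ(q, l) = ρ(p, q), where ρ denotes the amount of arc between two disjoint chords. -/

import Mathlib

open MeasureTheory Set Metric Filter Topology

noncomputable section

abbrev S1 := AddCircle (1 : ℝ)

def fd (d : ℕ) : S1 → S1 := fun x => d • x

def len (A : Set S1) : ℝ := (volume A).toReal

def IsHole (B H : Set S1) : Prop := ∃ x ∈ Bᶜ, H = connectedComponentIn Bᶜ x

def openArc (u w : S1) : Set S1 := {x | SBtw.sbtw u x w}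

def OrientPresOn (g : S1 → S1) (B : Set S1) : Prop :=
  Set.InjOn g B ∧ ∀ a ∈ B, ∀ b ∈ B, ∀ c ∈ B, SBtw.sbtw a b c → SBtw.sbtw (g a) (g b) (g c)

def emb (x : S1) : ℂ := (AddCircle.toCircle x : ℂ)

def chord (a b : S1) : Set ℂ := segment ℝ (emb a) (emb b)

def CH (A : Set S1) : Set ℂ := convexHull ℝ (emb '' A)

def Wandering (d N : ℕ) (T : Set S1) : Prop :=
  ∀ i j : ℕ, ((fd d)^[i] '' T).ncard = N ∧
    (i ≠ j → Disjoint (CH ((fd d)^[i] '' T)) (CH ((fd d)^[j] '' T)))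

def IsHoleEnum (B : Set S1) {N : ℕ} (H : Fin N → Set S1) : Prop :=
  Function.Injective H ∧ (∀ k, IsHole B (H k)) ∧ (∀ G, IsHole B G → ∃ k, H k = G) ∧
  ∀ k l : Fin N, k ≤ l → len (H k) ≤ len (H l)

def rem (d : ℕ) (s : ℝ) : ℝ := s - (⌊(d : ℝ) * s⌋ : ℝ) / d

def ImageHoleRel (g : S1 → S1) (H K : Set S1) : Prop :=
  ∃ u w : S1, u ≠ w ∧ H = openArc u w ∧ K = openArc (g u) (g w)

def InLimitSet (d : ℕ) (T : Set S1) (a b : S1) : Prop :=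
  ∃ φ : ℕ → ℕ, StrictMono φ ∧ ∃ u v : ℕ → S1,
    (∀ n, u n ∈ (fd d)^[φ n] '' T ∧ v n ∈ (fd d)^[φ n] '' T) ∧
    Tendsto (fun n => hausdorffDist (chord (u n) (v n)) (chord a b)) atTop (nhds 0)


section Stmt7Aux

lemma AA_sbtw_coe_iff (α β γ : ℝ) :
    SBtw.sbtw (α : S1) (β : S1) (γ : S1) ↔
      (toIcoMod zero_lt_one 0 (β - α) ≤ toIocMod zero_lt_one 0 (γ - α) ∧
        ¬ toIcoMod zero_lt_one 0 (β - γ) ≤ toIocMod zero_lt_one 0 (α - γ)) := by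
  rw [sbtw_iff_btw_not_btw, QuotientAddGroup.btw_coe_iff', QuotientAddGroup.btw_coe_iff']

lemma AA_coe_int_eq_zero (n : ℤ) : ((n : ℝ) : S1) = 0 :=
  (QuotientAddGroup.eq_zero_iff _).2 ⟨n, by simp⟩

lemma AA_coe_fract (ξ : ℝ) : ((Int.fract ξ : ℝ) : S1) = (ξ : S1) := by
  have h : (Int.fract ξ : ℝ) = ξ - (⌊ξ⌋ : ℝ) := rfl
  rw [h, QuotientAddGroup.mk_sub, AA_coe_int_eq_zero, sub_zero]

lemma AA_toIocMod_neg_of_mem {t : ℝ} (ht : t ∈ Ioo (0:ℝ) 1) :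
    toIocMod zero_lt_one 0 (-t) = 1 - t := by
  rw [toIocMod_eq_iff]
  refine ⟨⟨by linarith [ht.2], by linarith [ht.1]⟩, -1, by rw [zsmul_eq_mul]; push_cast; ring⟩

lemma AA_sbtw_zero_iff {t : ℝ} (ht : t ∈ Ioo (0:ℝ) 1) (ξ : ℝ) :
    SBtw.sbtw (0:S1) (ξ : S1) (t : S1) ↔ 0 < Int.fract ξ ∧ Int.fract ξ < t := by
  set a := Int.fract ξ with ha
  have haI : a ∈ Ico (0:ℝ) 1 := ⟨Int.fract_nonneg ξ, Int.fract_lt_one ξ⟩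
  have h0 : (0:S1) = ((0:ℝ) : S1) := rfl
  rw [← AA_coe_fract ξ, ← ha, h0, AA_sbtw_coe_iff]
  rw [sub_zero, sub_zero, zero_sub]
  rw [toIcoMod_eq_self zero_lt_one |>.2 (by simpa using haI),
    toIocMod_eq_self zero_lt_one |>.2 ⟨ht.1, by linarith [ht.2]⟩,
    AA_toIocMod_neg_of_mem ht]
  rcases lt_or_ge a t with hat | hta
  · have : toIcoMod zero_lt_one 0 (a - t) = a - t + 1 := by
      rw [toIcoMod_eq_iff]
      exact ⟨⟨by linarith [haI.1, ht.2], by linarith⟩, -1, by rw [zsmul_eq_mul]; push_cast; ring⟩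
    rw [this]
    constructor
    · rintro ⟨-, hn⟩
      refine ⟨?_, hat⟩
      by_contra h0a
      exact hn (by nlinarith [haI.1])
    · rintro ⟨h0a, -⟩
      exact ⟨hat.le, by intro hh; linarith⟩
  · have : toIcoMod zero_lt_one 0 (a - t) = a - t := by
      rw [toIcoMod_eq_self]
      exact ⟨by linarith, by linarith [haI.2, ht.1]⟩
    rw [this]
    constructor
    · rintro ⟨hle, hn⟩
      exact absurd (by linarith [haI.2] : a - t ≤ 1 - t) hn
    · rintro ⟨-, hat⟩
      exact absurd hta (not_le.2 hat)

lemma AA_sbtw_sub_iff (x y z c : S1) :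
    SBtw.sbtw (x - c) (y - c) (z - c) ↔ SBtw.sbtw x y z := by
  induction x using QuotientAddGroup.induction_on with | H α =>
  induction y using QuotientAddGroup.induction_on with | H β =>
  induction z using QuotientAddGroup.induction_on with | H γ =>
  induction c using QuotientAddGroup.induction_on with | H δ =>
  rw [← QuotientAddGroup.mk_sub, ← QuotientAddGroup.mk_sub, ← QuotientAddGroup.mk_sub]
  simp only [AA_sbtw_coe_iff, sub_sub_sub_cancel_right]

lemma AA_openArc_eq (u w : S1) :
    openArc u w = (fun x => x - u) ⁻¹' openArc 0 (w - u) := by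
  ext x
  simp only [openArc, mem_preimage, mem_setOf_eq]
  rw [show (0:S1) = u - u by rw [sub_self], AA_sbtw_sub_iff]

/-- the length of the (counterclockwise) arc from `x` to `y`, as a real in `(0,1]`. -/
def AA_dd (x y : S1) : ℝ := (AddCircle.equivIoc 1 0 (y - x) : ℝ)

lemma AA_dd_coe (α β : ℝ) : AA_dd ↑α ↑β = toIocMod zero_lt_one 0 (β - α) := by
  rw [AA_dd, ← QuotientAddGroup.mk_sub, AddCircle.equivIoc, QuotientAddGroup.equivIocMod]
  rfl

lemma AA_coe_dd (x y : S1) : ((AA_dd x y : ℝ) : S1) = y - x := by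
  have := (AddCircle.equivIoc 1 0).symm_apply_apply (y - x)
  rw [← this]
  rfl

lemma AA_dd_mem (x y : S1) : AA_dd x y ∈ Ioc (0:ℝ) 1 := by
  have := (AddCircle.equivIoc 1 0 (y - x)).2
  simpa [AA_dd] using this

lemma AA_dd_mem_Ioo {x y : S1} (h : x ≠ y) : AA_dd x y ∈ Ioo (0:ℝ) 1 := by
  refine ⟨(AA_dd_mem x y).1, lt_of_le_of_ne (AA_dd_mem x y).2 ?_⟩
  intro h1
  have := AA_coe_dd x y
  rw [h1] at this
  have h0 : ((1:ℝ) : S1) = 0 := by simpa using AA_coe_int_eq_zero 1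
  rw [h0] at this
  exact h (by rwa [eq_comm, sub_eq_zero, eq_comm] at this)

lemma AA_preim_openArc {t : ℝ} (ht : t ∈ Ioo (0:ℝ) 1) :
    (Quotient.mk'' ⁻¹' openArc (0:S1) (t : S1) : Set ℝ) = Int.fract ⁻¹' Ioo 0 t := by
  ext ξ
  simp only [mem_preimage, openArc, mem_setOf_eq, mem_Ioo]
  exact AA_sbtw_zero_iff ht ξ

lemma AA_volume_openArc_zero {t : ℝ} (ht : t ∈ Ioo (0:ℝ) 1) :
    volume (openArc (0:S1) (t : S1)) = ENNReal.ofReal t := by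
  have hmeas : MeasurableSet (openArc (0:S1) (t : S1)) := by
    rw [measurableSet_quotient, AA_preim_openArc ht]
    exact measurable_fract measurableSet_Ioo
  rw [AddCircle.add_projection_respects_measure (T := 1) 0 hmeas]
  have hs : (QuotientAddGroup.mk ⁻¹' openArc (0:S1) (t : S1) : Set ℝ) ∩ Ioc 0 (0 + 1) =
      Ioo 0 t := by
    rw [show (QuotientAddGroup.mk ⁻¹' openArc (0:S1) (t : S1) : Set ℝ)
        = Int.fract ⁻¹' Ioo 0 t from AA_preim_openArc ht]
    ext ξ
    simp only [mem_inter_iff, mem_preimage, mem_Ioo, mem_Ioc, zero_add]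
    constructor
    · rintro ⟨⟨h1, h2⟩, h3, h4⟩
      rcases eq_or_lt_of_le h4 with rfl | h4'
      · simp [Int.fract_one] at h1
      · rw [Int.fract_eq_self.2 ⟨h3.le, h4'⟩] at h1 h2; exact ⟨h1, h2⟩
    · rintro ⟨h1, h2⟩
      have hlt : ξ < 1 := h2.trans ht.2
      rw [Int.fract_eq_self.2 ⟨h1.le, hlt⟩]
      exact ⟨⟨h1, h2⟩, h1, hlt.le⟩
  rw [hs, Real.volume_Ioo, sub_zero]

lemma AA_volume_openArc {u w : S1} (h : u ≠ w) :
    volume (openArc u w) = ENNReal.ofReal (AA_dd u w) := by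
  have ht : AA_dd u w ∈ Ioo (0:ℝ) 1 := AA_dd_mem_Ioo h
  have hc : ((AA_dd u w : ℝ) : S1) = w - u := AA_coe_dd u w
  rw [AA_openArc_eq, show (fun x : S1 => x - u) = (fun x : S1 => -u + x) by
      funext x; rw [sub_eq_neg_add],
    measure_preimage_add, ← hc, AA_volume_openArc_zero ht]

lemma AA_len_openArc {u w : S1} (h : u ≠ w) : len (openArc u w) = AA_dd u w := by
  rw [len, AA_volume_openArc h, ENNReal.toReal_ofReal (AA_dd_mem_Ioo h).1.le]

lemma AA_sbtw_ne {x y z : S1} (h : SBtw.sbtw x y z) : x ≠ y ∧ y ≠ z ∧ x ≠ z := by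
  refine ⟨?_, ?_, ?_⟩ <;> rintro rfl
  · exact sbtw_irrefl_left h
  · exact sbtw_irrefl_right h
  · exact sbtw_irrefl_left_right h

lemma AA_dd_add {x y z : S1} (h : SBtw.sbtw x y z) : AA_dd x y + AA_dd y z = AA_dd x z := by
  obtain ⟨hxy, hyz, hxz⟩ := AA_sbtw_ne h
  set s := AA_dd x y with hs'
  set t := AA_dd x z with ht'
  have hs : ((s : ℝ) : S1) = y - x := AA_coe_dd x y
  have ht : ((t : ℝ) : S1) = z - x := AA_coe_dd x z
  have hsI : s ∈ Ioo (0:ℝ) 1 := AA_dd_mem_Ioo hxy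
  have htI : t ∈ Ioo (0:ℝ) 1 := AA_dd_mem_Ioo hxz
  have h0 : SBtw.sbtw (0:S1) ((s:ℝ):S1) ((t:ℝ):S1) := by
    rw [hs, ht, show (0:S1) = x - x by rw [sub_self], AA_sbtw_sub_iff]
    exact h
  have hst : s < t := by
    have := (AA_sbtw_zero_iff htI s).1 h0
    rw [Int.fract_eq_self.2 ⟨hsI.1.le, hsI.2⟩] at this; exact this.2
  have hdyz : AA_dd y z = t - s := by
    have harg : z - y = ((t:ℝ):S1) - ((s:ℝ):S1) := by rw [hs, ht]; abel
    have : AA_dd y z = AA_dd ((s:ℝ):S1) ((t:ℝ):S1) := by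
      rw [AA_dd, AA_dd, harg]
    rw [this, AA_dd_coe, toIocMod_eq_self]
    exact ⟨sub_pos.2 hst, by linarith [htI.2, hsI.1]⟩
  rw [hdyz]; ring

end Stmt7Aux

/-- additivity of the amount of arc ρ when a chord l = (u,v) separates
p = (a,b) from q = (c,e); the six endpoints lie in cyclic order a,b,u,c,e,v.
ρ(p,l) = len(b,u)+len(v,a), ρ(l,q) = len(u,c)+len(e,v), ρ(p,q) = len(b,c)+len(e,a). -/
theorem stmt7 (a b u c e v : S1)
    (h1 : SBtw.sbtw a b u) (h2 : SBtw.sbtw b u c) (h3 : SBtw.sbtw u c e)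
    (h4 : SBtw.sbtw c e v) (h5 : SBtw.sbtw e v a) :
    (len (openArc b u) + len (openArc v a)) +
      (len (openArc u c) + len (openArc e v)) =
    len (openArc b c) + len (openArc e a) := by
  obtain ⟨hbu, huc, hbc⟩ := AA_sbtw_ne h2
  obtain ⟨hev, hva, hea⟩ := AA_sbtw_ne h5
  rw [AA_len_openArc hbu, AA_len_openArc hva, AA_len_openArc huc, AA_len_openArc hev,
    AA_len_openArc hbc, AA_len_openArc hea]
  have e1 := AA_dd_add h2
  have e2 := AA_dd_add h5
  linarith
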